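/- There exists a constant C > 0 such that for every function f holomorphic in a neighborhood of the closed disc of radius 3, setting A = ∫_{3T} ln⁺|f(ζ)| dm(ζ), one has ln ∫_{2T} |f(ζ)| dm(ζ) ≤ C·A. -/

import Mathlib

open Complex Real Set Metric Function

lemma trig_approx {u : ℝ → ℝ} (hu : Continuous u) (hper : Function.Periodic u (2*π))
    {ε : ℝ} (hε : 0 < ε) :
    ∃ Q : ℂ → ℂ, Differentiable ℂ Q ∧
      ∀ θ : ℝ, |(Q (circleMap 0 3 θ)).re - u θ| < ε := by
  haveI : Fact (0 < 2*π) := ⟨by positivity⟩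
  set ub : C(AddCircle (2*π), ℝ) := ⟨hper.lift, hu.quotient_liftOn' _⟩ with hub
  set v : C(AddCircle (2*π), ℂ) := ⟨fun x => ((ub x : ℝ) : ℂ), Complex.continuous_ofReal.comp ub.continuous⟩ with hv
  have hmem : v ∈ closure ((Submodule.span ℂ (Set.range (@fourier (2*π)))) : Set _) := by
    have := span_fourier_closure_eq_top (T := 2*π)
    rw [← Submodule.topologicalClosure_coe, this]
    trivial
  rw [Metric.mem_closure_iff] at hmem
  obtain ⟨p, hp, hdist⟩ := hmem ε hε
  rw [SetLike.mem_coe, Finsupp.mem_span_range_iff_exists_finsupp] at hp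
  obtain ⟨c, hc⟩ := hp
  refine ⟨fun w => c.sum fun n a =>
      (if 0 ≤ n then a * (w/3)^(n.toNat) else (starRingEnd ℂ a) * (w/3)^((-n).toNat)),
    ?_, ?_⟩
  · simp only [Finsupp.sum]
    apply Differentiable.fun_sum
    intro n _
    by_cases h : 0 ≤ n <;> simp only [h, if_true, if_false] <;>
      exact ((differentiable_id.div_const _).pow _).const_mul _
  · intro θ
    have hre : (c.sum fun n a =>
        (if 0 ≤ n then a * ((circleMap 0 3 θ)/3)^(n.toNat)
          else (starRingEnd ℂ a) * ((circleMap 0 3 θ)/3)^((-n).toNat))).re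
        = (p (θ : AddCircle (2*π))).re := by
      rw [← hc]
      have hp3 : ((c.sum fun n a => a • fourier n) : C(AddCircle (2*π), ℂ)) (θ : AddCircle (2*π))
          = c.sum fun n a => a * fourier n (θ : AddCircle (2*π)) := by
        simp only [Finsupp.sum]
        simp
      rw [hp3]
      simp only [Finsupp.sum, Complex.re_sum]
      apply Finset.sum_congr rfl
      intro n _
      have hcm : (circleMap 0 3 θ)/3 = Complex.exp (θ * Complex.I) := by
        simp [circleMap]
      have hfn : fourier n (θ : AddCircle (2*π)) = Complex.exp (n * θ * Complex.I) := by
        rw [fourier_coe_apply]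
        congr 1
        have hπ : (π : ℂ) ≠ 0 := by
          simp [Complex.ofReal_ne_zero, Real.pi_ne_zero]
        field_simp
        push_cast; ring
      rw [hcm, hfn]
      by_cases h : 0 ≤ n
      · simp only [h, if_true]
        congr 2
        rw [← Complex.exp_nat_mul]
        congr 1
        have h2 : ((n.toNat : ℤ) : ℂ) = (n : ℂ) := by exact_mod_cast congrArg (fun m : ℤ => (m:ℂ)) (Int.toNat_of_nonneg h)
        push_cast at h2 ⊢
        rw [h2]; ring
      · simp only [h, if_false]
        have hkey : Complex.exp (θ * Complex.I) ^ (-n).toNat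
            = (starRingEnd ℂ) (Complex.exp ((n:ℂ) * θ * Complex.I)) := by
          rw [← Complex.exp_nat_mul, ← Complex.exp_conj]
          congr 1
          have h2 : (((-n).toNat : ℤ) : ℂ) = -(n : ℂ) := by
            exact_mod_cast congrArg (fun m : ℤ => (m:ℂ)) (Int.toNat_of_nonneg (by omega : (0:ℤ) ≤ -n))
          push_cast at h2 ⊢
          rw [h2]
          simp [Complex.conj_ofReal]
          ring
        rw [hkey, ← map_mul]
        exact Complex.conj_re _
    rw [hre]
    have hd := (ContinuousMap.dist_lt_iff hε).mp hdist (θ : AddCircle (2*π))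
    have hvθ : v (θ : AddCircle (2*π)) = ((u θ : ℝ) : ℂ) := by
      simp [hv, hub]; exact hper.lift_coe θ
    rw [hvθ, Complex.dist_eq] at hd
    calc |(p (θ : AddCircle (2*π))).re - u θ|
        = |((p (θ : AddCircle (2*π))) - ((u θ : ℝ):ℂ)).re| := by
          simp [Complex.sub_re]
      _ ≤ ‖(p (θ : AddCircle (2*π))) - ((u θ : ℝ):ℂ)‖ := Complex.abs_re_le_norm _
      _ < ε := by
          rw [show p (θ : AddCircle (2*π)) - ((u θ : ℝ):ℂ)
              = -(((u θ : ℝ):ℂ) - p (θ : AddCircle (2*π))) from by ring, norm_neg]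
          exact hd

lemma kernel_id {z ζ : ℂ} (hz : ‖z‖ = 2) (hζ : ‖ζ‖ = 3) :
    ζ * Complex.I * ((ζ - z)⁻¹ - (ζ - 9/(starRingEnd ℂ z))⁻¹)
      = Complex.I * (((5 / ‖ζ - z‖^2 : ℝ)) : ℂ) := by
  have hz0 : z ≠ 0 := by
    intro h; rw [h] at hz; simp at hz
  have hcz : starRingEnd ℂ z ≠ 0 := by simpa using hz0
  have h1 : ζ - z ≠ 0 := by
    intro h
    rw [sub_eq_zero] at h
    rw [h, hz] at hζ; norm_num at hζ
  have h2 : ζ - 9/(starRingEnd ℂ z) ≠ 0 := by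
    intro h
    rw [sub_eq_zero] at h
    have : ‖ζ‖ = ‖9/(starRingEnd ℂ z)‖ := by rw [h]
    rw [hζ, norm_div, Complex.norm_conj, hz] at this
    norm_num at this
  have hm1 : ζ * (starRingEnd ℂ) ζ = 9 := by
    rw [Complex.mul_conj, Complex.normSq_eq_norm_sq, hζ]; norm_num
  have hm2 : z * (starRingEnd ℂ) z = 4 := by
    rw [Complex.mul_conj, Complex.normSq_eq_norm_sq, hz]; norm_num
  have habs : ((‖ζ - z‖^2 : ℝ) : ℂ) = (ζ - z) * (starRingEnd ℂ) (ζ - z) := by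
    rw [Complex.mul_conj, Complex.normSq_eq_norm_sq]
  have habs0' : (ζ - z) * (starRingEnd ℂ) (ζ - z) ≠ 0 := by
    refine mul_ne_zero h1 ?_
    rw [map_sub]
    intro h
    rw [sub_eq_zero] at h
    exact h1 (sub_eq_zero.mpr (starRingEnd ℂ |>.injective h))
  have hC : ζ * (starRingEnd ℂ) z - 9 ≠ 0 := by
    intro h
    rw [sub_eq_zero] at h
    have : ‖ζ * (starRingEnd ℂ) z‖ = 9 := by rw [h]; norm_num
    rw [norm_mul, Complex.norm_conj, hζ, hz] at this
    norm_num at this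
  have key : ζ * ((ζ - z)⁻¹ - (ζ - 9/(starRingEnd ℂ z))⁻¹)
      = 5 / ((ζ - z) * (starRingEnd ℂ) (ζ - z)) := by
    rw [inv_sub_inv h1 h2, mul_div_assoc', div_eq_div_iff (mul_ne_zero h1 h2) habs0']
    simp only [map_sub]
    field_simp
    ring_nf
    linear_combination (ζ*((starRingEnd ℂ) ζ - (starRingEnd ℂ) z))*hm2
      - 5*hm1
  calc ζ * Complex.I * ((ζ - z)⁻¹ - (ζ - 9/(starRingEnd ℂ z))⁻¹)
      = Complex.I * (ζ * ((ζ - z)⁻¹ - (ζ - 9/(starRingEnd ℂ z))⁻¹)) := by ring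
    _ = Complex.I * (((5 / ‖ζ - z‖^2 : ℝ)) : ℂ) := by
        rw [key, Complex.ofReal_div, habs]
        norm_num

lemma poisson_entire {Q : ℂ → ℂ} (hQ : Differentiable ℂ Q) {z : ℂ} (hz : ‖z‖ = 2) :
    (∫ θ in (0:ℝ)..(2*π),
        (5 / ‖circleMap 0 3 θ - z‖^2) * (Q (circleMap 0 3 θ)).re)
      = 2*π*((Q z).re) := by
  set w : ℂ := 9/(starRingEnd ℂ z) with hw
  have hz0 : z ≠ 0 := by intro h; rw [h] at hz; simp at hz
  have habsw : ‖w‖ = 9/2 := by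
    rw [hw, norm_div, Complex.norm_conj, hz]; norm_num
  have hzb : z ∈ Metric.ball (0:ℂ) 3 := by
    rw [mem_ball_zero_iff, hz]; norm_num
  have E1 : (∮ ζ in C(0, 3), (ζ - z)⁻¹ • Q ζ) = (2*π*Complex.I) • Q z :=
    (hQ.diffContOnCl).circleIntegral_sub_inv_smul hzb
  have hwne : ∀ ζ ∈ Metric.closedBall (0:ℂ) 3, ζ - w ≠ 0 := by
    intro ζ hζ h
    rw [sub_eq_zero] at h
    rw [mem_closedBall_zero_iff, h, habsw] at hζ
    norm_num at hζ
  have E2 : (∮ ζ in C(0, 3), (ζ - w)⁻¹ • Q ζ) = 0 := by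
    apply Complex.circleIntegral_eq_zero_of_differentiable_on_off_countable
      (by norm_num : (0:ℝ) ≤ 3) Set.countable_empty
    · exact ((continuousOn_id.sub continuousOn_const).inv₀ hwne).smul
        hQ.continuous.continuousOn
    · intro ζ hζ
      exact ((((differentiableAt_id (x := ζ)).fun_sub (differentiableAt_const _)).inv
        (hwne ζ (Metric.ball_subset_closedBall hζ.1))).fun_smul (hQ ζ))
  have int1 : CircleIntegrable (fun ζ => (ζ - z)⁻¹ • Q ζ) 0 3 := by
    apply ContinuousOn.circleIntegrable (by norm_num : (0:ℝ) ≤ 3)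
    apply ContinuousOn.fun_smul _ hQ.continuous.continuousOn
    apply ContinuousOn.inv₀ (continuousOn_id.fun_sub continuousOn_const)
    intro ζ hζ h
    rw [sub_eq_zero] at h
    simp only [id_eq] at h
    rw [mem_sphere_zero_iff_norm, h, hz] at hζ
    norm_num at hζ
  have int2 : CircleIntegrable (fun ζ => (ζ - w)⁻¹ • Q ζ) 0 3 := by
    apply ContinuousOn.circleIntegrable (by norm_num : (0:ℝ) ≤ 3)
    apply ContinuousOn.fun_smul _ hQ.continuous.continuousOn
    apply ContinuousOn.inv₀ (continuousOn_id.fun_sub continuousOn_const)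
    intro ζ hζ
    exact hwne ζ (Metric.sphere_subset_closedBall hζ)
  have E3 : (∮ ζ in C(0, 3), ((ζ - z)⁻¹ • Q ζ - (ζ - w)⁻¹ • Q ζ)) = (2*π*Complex.I) • Q z := by
    rw [circleIntegral.integral_sub int1 int2, E1, E2, sub_zero]
  rw [circleIntegral] at E3
  have E4 : (∫ θ in (0:ℝ)..(2*π), deriv (circleMap 0 3) θ •
        ((circleMap 0 3 θ - z)⁻¹ • Q (circleMap 0 3 θ) - (circleMap 0 3 θ - w)⁻¹ • Q (circleMap 0 3 θ)))
      = ∫ θ in (0:ℝ)..(2*π), Complex.I •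
          ((((5 / ‖circleMap 0 3 θ - z‖^2 : ℝ)) : ℂ) * Q (circleMap 0 3 θ)) := by
    apply intervalIntegral.integral_congr
    intro θ _
    have hζ3 : ‖circleMap 0 3 θ‖ = 3 := by
      rw [norm_circleMap_zero]; norm_num
    have hk := kernel_id hz hζ3
    simp only [deriv_circleMap, smul_eq_mul]
    calc circleMap 0 3 θ * Complex.I *
          ((circleMap 0 3 θ - z)⁻¹ * Q (circleMap 0 3 θ) - (circleMap 0 3 θ - w)⁻¹ * Q (circleMap 0 3 θ))
        = (circleMap 0 3 θ * Complex.I * ((circleMap 0 3 θ - z)⁻¹ - (circleMap 0 3 θ - w)⁻¹))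
            * Q (circleMap 0 3 θ) := by ring
      _ = Complex.I * ((((5 / ‖circleMap 0 3 θ - z‖^2 : ℝ)) : ℂ) * Q (circleMap 0 3 θ)) := by
          rw [hk]; ring
  rw [E4, intervalIntegral.integral_smul] at E3
  simp only [smul_eq_mul] at E3
  have E5 : (∫ θ in (0:ℝ)..(2*π),
        ((((5 / ‖circleMap 0 3 θ - z‖^2 : ℝ)) : ℂ) * Q (circleMap 0 3 θ)))
      = 2 * (π:ℂ) * Q z := by
    apply mul_left_cancel₀ Complex.I_ne_zero
    rw [E3]; ring
  have hlow : ∀ θ : ℝ, (1:ℝ) ≤ ‖circleMap 0 3 θ - z‖ := by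
    intro θ
    have h1 := norm_sub_norm_le (circleMap 0 3 θ) z
    rw [norm_circleMap_zero, hz] at h1
    calc (1:ℝ) = |(3:ℝ)| - 2 := by norm_num
      _ ≤ ‖circleMap 0 3 θ - z‖ := h1
  have hcontP : Continuous (fun θ : ℝ => (5 / ‖circleMap 0 3 θ - z‖^2 : ℝ)) := by
    apply continuous_const.div
    · exact (continuous_norm.comp ((continuous_circleMap 0 3).sub continuous_const)).pow 2
    · intro θ
      have := hlow θ
      positivity
  have hint : IntervalIntegrable
      (fun θ : ℝ => (((5 / ‖circleMap 0 3 θ - z‖^2 : ℝ)) : ℂ) * Q (circleMap 0 3 θ))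
      MeasureTheory.volume 0 (2*π) := by
    apply Continuous.intervalIntegrable
    exact (Complex.continuous_ofReal.comp hcontP).mul
      (hQ.continuous.comp (continuous_circleMap 0 3))
  have E6 := Complex.reCLM.intervalIntegral_comp_comm hint
  rw [E5] at E6
  have E7 : ∀ θ : ℝ, Complex.reCLM
        ((((5 / ‖circleMap 0 3 θ - z‖^2 : ℝ)) : ℂ) * Q (circleMap 0 3 θ))
      = (5 / ‖circleMap 0 3 θ - z‖^2) * (Q (circleMap 0 3 θ)).re := by
    intro θ
    have hre : ∀ (r : ℝ) (v : ℂ), Complex.reCLM ((r:ℂ) * v) = r * v.re := by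
      intro r v
      simp only [Complex.reCLM_apply, Complex.mul_re, Complex.ofReal_re, Complex.ofReal_im,
        zero_mul, sub_zero]
    exact hre _ _
  calc (∫ θ in (0:ℝ)..(2*π),
        (5 / ‖circleMap 0 3 θ - z‖^2) * (Q (circleMap 0 3 θ)).re)
      = ∫ θ in (0:ℝ)..(2*π), Complex.reCLM
          ((((5 / ‖circleMap 0 3 θ - z‖^2 : ℝ)) : ℂ) * Q (circleMap 0 3 θ)) := by
        apply intervalIntegral.integral_congr
        intro θ _
        exact (E7 θ).symm
    _ = (2 * (π:ℂ) * Q z).re := E6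
    _ = 2*π*((Q z).re) := by
        simp [Complex.mul_re]

/-- The average of a real-valued function over the circle of radius `r` centered at `0`,
with respect to normalized Lebesgue measure of total mass 1. -/
noncomputable def circAvg (r : ℝ) (u : ℂ → ℝ) : ℝ :=
  (2 * Real.pi)⁻¹ * ∫ θ in (0:ℝ)..(2 * Real.pi), u (circleMap 0 r θ)

lemma maxlog_eq {x : ℝ} (hx : 0 ≤ x) : max (Real.log x) 0 = Real.log (max x 1) := by
  rcases le_or_gt 1 x with h | h
  · rw [max_eq_left (Real.log_nonneg h), max_eq_left h]
  · rw [max_eq_right (Real.log_nonpos hx h.le), max_eq_right h.le, Real.log_one]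

lemma pointwise_bound {f : ℂ → ℂ} {U : Set ℂ}
    (hsub : Metric.closedBall (0:ℂ) 3 ⊆ U) (hf : DifferentiableOn ℂ f U)
    {z : ℂ} (hz : ‖z‖ = 2) :
    ‖f z‖ ≤
      Real.exp (5 * circAvg 3 (fun ζ => max (Real.log (‖f ζ‖)) 0)) := by
  set u : ℝ → ℝ := fun θ => max (Real.log (‖f (circleMap 0 3 θ)‖)) 0 with hu
  set A : ℝ := circAvg 3 (fun ζ => max (Real.log (‖f ζ‖)) 0) with hA
  have hAeq : A = (2 * π)⁻¹ * ∫ θ in (0:ℝ)..(2*π), u θ := rfl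
  have hfc : ContinuousOn f U := hf.continuousOn
  have hc3 : Continuous fun θ : ℝ => f (circleMap 0 3 θ) := by
    apply hfc.comp_continuous (continuous_circleMap 0 3)
    intro θ
    exact hsub (circleMap_mem_closedBall 0 (by norm_num) θ)
  have hucont : Continuous u := by
    have hueq : u = fun θ => Real.log (max (‖f (circleMap 0 3 θ)‖) 1) := by
      funext θ
      exact maxlog_eq (norm_nonneg _)
    rw [hueq]
    apply Continuous.log
    · exact (continuous_norm.comp hc3).max continuous_const
    · intro θ
      have : (1:ℝ) ≤ max (‖f (circleMap 0 3 θ)‖) 1 := le_max_right _ _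
      positivity
  have huper : Periodic u (2*π) := by
    intro θ
    simp only [hu, periodic_circleMap 0 3 θ]
  have hunn : ∀ θ, 0 ≤ u θ := fun θ => le_max_right _ _
  have hulow : ∀ θ, Real.log (‖f (circleMap 0 3 θ)‖) ≤ u θ := fun θ => le_max_left _ _
  have hεb : ∀ ε : ℝ, 0 < ε → ‖f z‖ ≤ Real.exp (5*A + 10*ε) := by
    intro ε hε
    obtain ⟨Q, hQd, hQa⟩ := trig_approx (hucont.fun_add continuous_const)
      (fun x => by simp only [huper x]) hε
    set q : ℝ → ℝ := fun θ => (Q (circleMap 0 3 θ)).re with hq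
    have hq1 : ∀ θ, u θ ≤ q θ := by
      intro θ
      have := abs_lt.mp (hQa θ)
      simp only [hq]
      linarith [this.1]
    have hq2 : ∀ θ, q θ ≤ u θ + 2*ε := by
      intro θ
      have := abs_lt.mp (hQa θ)
      simp only [hq]
      linarith [this.2]
    have hqnn : ∀ θ, 0 ≤ q θ := fun θ => le_trans (hunn θ) (hq1 θ)
    -- Poisson identity for Q
    have hpois := poisson_entire hQd hz
    -- kernel bounds
    have hlow : ∀ θ : ℝ, (1:ℝ) ≤ ‖circleMap 0 3 θ - z‖ := by
      intro θ
      have h1 := norm_sub_norm_le (circleMap 0 3 θ) z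
      rw [norm_circleMap_zero, hz] at h1
      calc (1:ℝ) = |(3:ℝ)| - 2 := by norm_num
        _ ≤ ‖circleMap 0 3 θ - z‖ := h1
    have hcontP : Continuous (fun θ : ℝ => (5 / ‖circleMap 0 3 θ - z‖^2 : ℝ)) := by
      apply continuous_const.div
      · exact (continuous_norm.comp ((continuous_circleMap 0 3).sub continuous_const)).pow 2
      · intro θ
        have := hlow θ
        positivity
    have hqcont : Continuous q := Complex.continuous_re.comp
      (hQd.continuous.comp (continuous_circleMap 0 3))
    have hPb : ∀ θ : ℝ, (5 / ‖circleMap 0 3 θ - z‖^2 : ℝ) ≤ 5 := by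
      intro θ
      have h1 := hlow θ
      have h2 : (1:ℝ) ≤ ‖circleMap 0 3 θ - z‖^2 := by nlinarith
      calc (5 / ‖circleMap 0 3 θ - z‖^2 : ℝ) ≤ 5 / 1 := by
            apply div_le_div_of_nonneg_left (by norm_num) (by norm_num) h2
        _ = 5 := by norm_num
    have hPnn : ∀ θ : ℝ, (0:ℝ) ≤ 5 / ‖circleMap 0 3 θ - z‖^2 := by
      intro θ
      have := hlow θ
      positivity
    have hmono : (∫ θ in (0:ℝ)..(2*π),
          (5 / ‖circleMap 0 3 θ - z‖^2) * q θ)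
        ≤ ∫ θ in (0:ℝ)..(2*π), (5 * u θ + 10*ε) := by
      apply intervalIntegral.integral_mono_on (by positivity)
      · exact (hcontP.mul hqcont).intervalIntegrable _ _
      · exact (((continuous_const.mul hucont).add continuous_const)).intervalIntegrable _ _
      · intro θ _
        calc (5 / ‖circleMap 0 3 θ - z‖^2) * q θ
            ≤ 5 * q θ := mul_le_mul_of_nonneg_right (hPb θ) (hqnn θ)
          _ ≤ 5 * (u θ + 2*ε) := by
              have := hq2 θ
              nlinarith
          _ = 5 * u θ + 10*ε := by ring
    have hrhs : (∫ θ in (0:ℝ)..(2*π), (5 * u θ + 10*ε))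
        = 5 * (∫ θ in (0:ℝ)..(2*π), u θ) + 2*π*(10*ε) := by
      rw [intervalIntegral.integral_add ((continuous_const.fun_mul hucont).intervalIntegrable _ _)
        (continuous_const.intervalIntegrable _ _), intervalIntegral.integral_const_mul,
        intervalIntegral.integral_const, smul_eq_mul]
      ring
    have h2π : (0:ℝ) < 2*π := by positivity
    have hu2 : (∫ θ in (0:ℝ)..(2*π), u θ) = 2*π*A := by
      rw [hAeq]; field_simp
    have hReQ : (Q z).re ≤ 5*A + 10*ε := by
      have hInt : 2*π*((Q z).re) ≤ 5*(2*π*A) + 2*π*(10*ε) := by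
        rw [← hpois, ← hu2]
        exact hmono.trans_eq hrhs
      nlinarith
    -- maximum modulus principle
    set F : ℂ → ℂ := fun w => Complex.exp (-Q w) * f w with hF
    have hFd : DiffContOnCl ℂ F (Metric.ball (0:ℂ) 3) := by
      constructor
      · exact ((hQd.neg.cexp).differentiableOn).mul
          (hf.mono fun x hx => hsub (ball_subset_closedBall hx))
      · rw [closure_ball (0:ℂ) (by norm_num : (3:ℝ) ≠ 0)]
        exact ((hQd.neg.cexp).continuous.continuousOn).mul (hfc.mono hsub)
    have hfront : ∀ w ∈ frontier (Metric.ball (0:ℂ) 3), ‖F w‖ ≤ 1 := by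
      intro w hw
      rw [frontier_ball (0:ℂ) (by norm_num : (3:ℝ) ≠ 0)] at hw
      have habsw : ‖w‖ = 3 := by
        rwa [mem_sphere_zero_iff_norm] at hw
      have hwc : w = circleMap 0 3 (Complex.arg w) := by
        have h1 := Complex.norm_mul_exp_arg_mul_I w
        rw [habsw] at h1
        simp only [circleMap, zero_add, Complex.ofReal_ofNat]
        exact h1.symm
      have hfw : ‖f w‖ ≤ Real.exp (q (Complex.arg w)) := by
        have h1 : ‖f w‖ ≤ Real.exp (u (Complex.arg w)) := by
          rcases eq_or_lt_of_le (norm_nonneg (f w)) with h0 | h0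
          · rw [← h0]; positivity
          · have h2 : Real.log (‖f w‖) ≤ u (Complex.arg w) := by
              have := hulow (Complex.arg w)
              rwa [← hwc] at this
            calc ‖f w‖ = Real.exp (Real.log (‖f w‖)) :=
                  (Real.exp_log h0).symm
              _ ≤ Real.exp (u (Complex.arg w)) := Real.exp_le_exp.mpr h2
        exact h1.trans (Real.exp_le_exp.mpr (hq1 _))
      have hqw : (Q w).re = q (Complex.arg w) := by
        simp only [hq]
        rw [← hwc]
      have hnorm : ‖F w‖ = Real.exp (-(Q w).re) * ‖f w‖ := by
        simp only [hF, norm_mul, Complex.norm_exp, Complex.neg_re]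
      rw [hnorm]
      calc Real.exp (-(Q w).re) * ‖f w‖
          ≤ Real.exp (-(Q w).re) * Real.exp (q (Complex.arg w)) :=
            mul_le_mul_of_nonneg_left hfw (Real.exp_nonneg _)
        _ = 1 := by rw [hqw, ← Real.exp_add]; simp
    have hzin : z ∈ closure (Metric.ball (0:ℂ) 3) := by
      rw [closure_ball (0:ℂ) (by norm_num : (3:ℝ) ≠ 0), mem_closedBall_zero_iff,
        hz]
      norm_num
    have hFz := Complex.norm_le_of_forall_mem_frontier_norm_le isBounded_ball hFd hfront hzin
    have hFz' : Real.exp (-(Q z).re) * ‖f z‖ ≤ 1 := by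
      have hnorm : ‖F z‖ = Real.exp (-(Q z).re) * ‖f z‖ := by
        simp only [hF, norm_mul, Complex.norm_exp, Complex.neg_re]
      rwa [hnorm] at hFz
    have habsfz : ‖f z‖ ≤ Real.exp ((Q z).re) := by
      have he : (0:ℝ) < Real.exp (-(Q z).re) := Real.exp_pos _
      have h1 : Real.exp (-(Q z).re) * Real.exp ((Q z).re) = 1 := by
        rw [← Real.exp_add]; simp
      nlinarith
    calc ‖f z‖ ≤ Real.exp ((Q z).re) := habsfz
      _ ≤ Real.exp (5*A + 10*ε) := Real.exp_le_exp.mpr hReQ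
  have htend : Filter.Tendsto (fun ε : ℝ => Real.exp (5*A + 10*ε))
      (nhdsWithin 0 (Set.Ioi 0)) (nhds (Real.exp (5*A))) := by
    have hcont : Continuous fun ε : ℝ => Real.exp (5*A + 10*ε) := by continuity
    have h := hcont.tendsto 0
    simp only [mul_zero, add_zero] at h
    exact h.mono_left nhdsWithin_le_nhds
  exact ge_of_tendsto htend (eventually_nhdsWithin_of_forall fun ε hε => hεb ε hε)

/-- Lemma 4.5: there exists a constant `C > 0` such that for every `f` holomorphic in a
neighborhood of the closed disc of radius 3, setting `A = ∫_{3𝕋} ln⁺|f| dm`, one has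
`ln ∫_{2𝕋} |f| dm ≤ C · A`. -/
theorem log_integral_le_const_mul : ∃ C : ℝ, 0 < C ∧
    ∀ (f : ℂ → ℂ) (U : Set ℂ), IsOpen U → Metric.closedBall (0:ℂ) 3 ⊆ U →
      DifferentiableOn ℂ f U →
      Real.log (circAvg 2 (fun ζ => ‖f ζ‖)) ≤
        C * circAvg 3 (fun ζ => max (Real.log (‖f ζ‖)) 0) := by
  refine ⟨5, by norm_num, ?_⟩
  intro f U hU hsub hf
  set A : ℝ := circAvg 3 (fun ζ => max (Real.log (‖f ζ‖)) 0) with hA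
  have hAnn : 0 ≤ A := by
    apply mul_nonneg (by positivity)
    exact intervalIntegral.integral_nonneg (by positivity) fun θ _ => le_max_right _ _
  have hc2 : Continuous fun θ : ℝ => ‖f (circleMap 0 2 θ)‖ := by
    apply continuous_norm.comp
    apply hf.continuousOn.comp_continuous (continuous_circleMap 0 2)
    intro θ
    exact hsub (closedBall_subset_closedBall (by norm_num)
      (circleMap_mem_closedBall 0 (by norm_num) θ))
  have hkey : ∀ θ : ℝ, ‖f (circleMap 0 2 θ)‖ ≤ Real.exp (5*A) := by
    intro θ
    exact pointwise_bound hsub hf (by rw [norm_circleMap_zero]; norm_num)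
  have havg : circAvg 2 (fun ζ => ‖f ζ‖) ≤ Real.exp (5*A) := by
    rw [circAvg]
    have hle : (∫ θ in (0:ℝ)..(2*π), ‖f (circleMap 0 2 θ)‖)
        ≤ ∫ _ in (0:ℝ)..(2*π), Real.exp (5*A) := by
      apply intervalIntegral.integral_mono_on (by positivity)
        (hc2.intervalIntegrable _ _) (continuous_const.intervalIntegrable _ _)
      exact fun θ _ => hkey θ
    rw [intervalIntegral.integral_const, smul_eq_mul, sub_zero] at hle
    calc (2*π)⁻¹ * ∫ θ in (0:ℝ)..(2*π), ‖f (circleMap 0 2 θ)‖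
        ≤ (2*π)⁻¹ * (2*π*Real.exp (5*A)) :=
          mul_le_mul_of_nonneg_left hle (by positivity)
      _ = Real.exp (5*A) := by
          rw [← mul_assoc, inv_mul_cancel₀ (by positivity : (2*π:ℝ) ≠ 0), one_mul]
  have havgnn : 0 ≤ circAvg 2 (fun ζ => ‖f ζ‖) := by
    apply mul_nonneg (by positivity)
    exact intervalIntegral.integral_nonneg (by positivity) fun θ _ => norm_nonneg _
  rcases eq_or_lt_of_le havgnn with h0 | h0
  · rw [← h0, Real.log_zero]
    exact mul_nonneg (by norm_num) hAnn
  · calc Real.log (circAvg 2 (fun ζ => ‖f ζ‖))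
        ≤ Real.log (Real.exp (5*A)) := Real.log_le_log h0 havg
      _ = 5*A := Real.log_exp _
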